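/- Let P = conv(u_0, u_1, u_2, u_3) ⊆ ℝ^3 be a full-dimensional lattice simplex with lattice length l(P) ≥ 2. For each 0 ≤ i ≤ 3 define A_i = 1 − Σ_{j≠i} r_{ij,2}/(l_{ij} − r_{ij,2}). If A_i ≥ 0 for all 0 ≤ i ≤ 3, then P = P_{0,2} ∪ P_{1,2} ∪ P_{2,2} ∪ P_{3,2}. -/

import Mathlib

open Finset Pointwise

noncomputable section

/-- The real point corresponding to a lattice point. -/
def toR {n : ℕ} (v : Fin n → ℤ) : Fin n → ℝ := fun x => (v x : ℝ)

/-- The lattice simplex (as a subset of `ℝ^n`) with the given lattice vertices. -/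
def lsimplex {n m : ℕ} (u : Fin m → Fin n → ℤ) : Set (Fin n → ℝ) :=
  convexHull ℝ (Set.range fun i => toR (u i))

/-- The lattice length `l_{ij}` of the edge `u_i u_j`:
the gcd of the coordinates of `u_j - u_i`. -/
def latLen {n m : ℕ} (u : Fin m → Fin n → ℤ) (i j : Fin m) : ℕ :=
  Finset.univ.gcd fun x => (u j x - u i x).natAbs

/-- `r_{ij,k}`: the least nonnegative residue of `l_{ij}` modulo `k`. -/
def rmod {n m : ℕ} (u : Fin m → Fin n → ℤ) (i j : Fin m) (k : ℕ) : ℕ :=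
  latLen u i j % k

/-- The vertices of the `k`-dilation `P_{i,k}`: the vertex `u_i` together with, for `j ≠ i`,
the points `((l_{ij} - r_{ij,k})/l_{ij})·u_j + (r_{ij,k}/l_{ij})·u_i`. -/
def dilVert {n m : ℕ} (u : Fin m → Fin n → ℤ) (i : Fin m) (k : ℕ) (j : Fin m) :
    Fin n → ℝ :=
  if j = i then toR (u i)
  else
    ((((latLen u i j : ℝ) - (rmod u i j k : ℝ)) / (latLen u i j : ℝ)) • toR (u j))
      + (((rmod u i j k : ℝ) / (latLen u i j : ℝ)) • toR (u i))

/-- The `k`-dilation `P_{i,k}`. -/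
def dil {n m : ℕ} (u : Fin m → Fin n → ℤ) (i : Fin m) (k : ℕ) : Set (Fin n → ℝ) :=
  convexHull ℝ (Set.range (dilVert u i k))

/-- The primitive edge vector `ũ_{ij} = (u_j - u_i)/l_{ij}`. -/
def primVec {n m : ℕ} (u : Fin m → Fin n → ℤ) (i j : Fin m) : Fin n → ℝ :=
  (latLen u i j : ℝ)⁻¹ • (toR (u j) - toR (u i))

/-- The translated `k`-dilation `P_{i,k,t} = P_{i,k} + Σ_{j ≠ i} t_j ũ_{ij}`. -/
def dilT {n m : ℕ} (u : Fin m → Fin n → ℤ) (i : Fin m) (k : ℕ) (t : Fin m → ℕ) :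
    Set (Fin n → ℝ) :=
  (fun y => y + ∑ j ∈ Finset.univ.erase i, (t j : ℝ) • primVec u i j) '' dil u i k

/-- in dimension 3, if `A_i = 1 − Σ_{j≠i} r_{ij,2}/(l_{ij} − r_{ij,2}) ≥ 0`
for all `i`, then `P = P_{0,2} ∪ P_{1,2} ∪ P_{2,2} ∪ P_{3,2}`. -/

lemma mem_hull_iff {E : Type*} [AddCommGroup E] [Module ℝ E] {m : ℕ} (f : Fin m → E) (x : E) :
    x ∈ convexHull ℝ (Set.range f) ↔
      ∃ w : Fin m → ℝ, (∀ i, 0 ≤ w i) ∧ ∑ i, w i = 1 ∧ ∑ i, w i • f i = x := by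
  rw [convexHull_range_eq_exists_affineCombination]
  constructor
  · rintro ⟨s, w, h0, h1, rfl⟩
    refine ⟨fun j => if j ∈ s then w j else 0, fun i => by by_cases hi : i ∈ s <;> simp [hi, h0 i], ?_, ?_⟩
    · rw [← Finset.sum_subset (Finset.subset_univ s) (by intro i _ hi; simp [hi])]
      simpa using h1
    · rw [← Finset.sum_subset (Finset.subset_univ s) (by intro i _ hi; simp [hi]),
        affineCombination_eq_linear_combination s f w h1]
      exact Finset.sum_congr rfl (fun i hi => by simp [hi])
  · rintro ⟨w, h0, h1, rfl⟩
    exact ⟨Finset.univ, w, fun i _ => h0 i, h1,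
      by rw [affineCombination_eq_linear_combination _ _ _ h1]⟩

lemma pigeon {m : ℕ} (D : Fin m → Fin m → ℝ) (hsym : ∀ i j, D i j = D j i)
    (h0 : ∀ i j, 0 ≤ D i j) (hrow : ∀ i, ∑ j, D i j ≤ 1)
    (lam : Fin m → ℝ) (hl0 : ∀ i, 0 ≤ lam i) (hl1 : ∑ i, lam i = 1) :
    ∃ i, ∑ j, D i j * lam j ≤ lam i := by
  by_contra h
  push_neg at h
  obtain ⟨i0, -, hi0⟩ : ∃ i ∈ Finset.univ, 0 < lam i := by
    by_contra hc
    push_neg at hc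
    have : ∑ i, lam i ≤ 0 := Finset.sum_nonpos (fun i hi => hc i hi)
    linarith
  have h1 : ∑ i, lam i ^ 2 < ∑ i, lam i * ∑ j, D i j * lam j := by
    refine Finset.sum_lt_sum (fun i _ => ?_) ⟨i0, Finset.mem_univ i0, ?_⟩
    · have := (h i).le
      nlinarith [hl0 i]
    · have := h i0
      nlinarith
  have h2 : ∑ i, lam i * ∑ j, D i j * lam j
      ≤ ∑ i, ∑ j, (D i j * lam i ^ 2 / 2 + D i j * lam j ^ 2 / 2) := by
    apply Finset.sum_le_sum
    intro i _
    rw [Finset.mul_sum]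
    apply Finset.sum_le_sum
    intro j _
    nlinarith [h0 i j, sq_nonneg (lam i - lam j)]
  have h3 : ∑ i, ∑ j : Fin m, (D i j * lam i ^ 2 / 2 + D i j * lam j ^ 2 / 2)
      ≤ ∑ i, lam i ^ 2 := by
    have e1 : ∀ i, ∑ j : Fin m, D i j * lam i ^ 2 / 2 ≤ lam i ^ 2 / 2 := by
      intro i
      have : ∑ j : Fin m, D i j * lam i ^ 2 / 2 = (∑ j, D i j) * (lam i ^ 2 / 2) := by
        rw [Finset.sum_mul]; exact Finset.sum_congr rfl (fun j _ => by ring)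
      rw [this]
      have h2 := sq_nonneg (lam i)
      nlinarith [hrow i]
    have e2 : ∑ i, ∑ j : Fin m, D i j * lam j ^ 2 / 2 ≤ ∑ i, lam i ^ 2 / 2 := by
      rw [Finset.sum_comm]
      apply Finset.sum_le_sum
      intro j _
      have : ∑ i : Fin m, D i j * lam j ^ 2 / 2 = (∑ i, D j i) * (lam j ^ 2 / 2) := by
        rw [Finset.sum_mul]
        exact Finset.sum_congr rfl (fun i _ => by rw [hsym i j]; ring)
      rw [this]
      nlinarith [hrow j, sq_nonneg (lam j)]
    calc ∑ i, ∑ j : Fin m, (D i j * lam i ^ 2 / 2 + D i j * lam j ^ 2 / 2)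
        = ∑ i, ((∑ j : Fin m, D i j * lam i ^ 2 / 2) + ∑ j : Fin m, D i j * lam j ^ 2 / 2) := by
          exact Finset.sum_congr rfl (fun i _ => Finset.sum_add_distrib)
      _ ≤ ∑ i, (lam i ^ 2 / 2) + ∑ i, ∑ j : Fin m, D i j * lam j ^ 2 / 2 := by
          rw [Finset.sum_add_distrib]
          exact add_le_add_left (Finset.sum_le_sum fun i _ => e1 i) _
      _ ≤ ∑ i, (lam i ^ 2 / 2) + ∑ i, lam i ^ 2 / 2 := add_le_add_right e2 _
      _ = ∑ i, lam i ^ 2 := by rw [← Finset.sum_add_distrib]; exact Finset.sum_congr rfl (fun i _ => by ring)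
  linarith

theorem dim3_cover_of_A_nonneg
    (u : Fin 4 → Fin 3 → ℤ)
    (hind : AffineIndependent ℝ fun i => toR (u i))
    (hlen : ∀ i j, i ≠ j → 2 ≤ latLen u i j)
    (A : Fin 4 → ℝ)
    (hA : ∀ i, A i = 1 - ∑ j ∈ Finset.univ.erase i,
      (rmod u i j 2 : ℝ) / ((latLen u i j : ℝ) - (rmod u i j 2 : ℝ)))
    (hAnn : ∀ i, 0 ≤ A i) :
    lsimplex u = dil u 0 2 ∪ dil u 1 2 ∪ dil u 2 2 ∪ dil u 3 2 := by
  classical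
  have hLsymm : ∀ i j : Fin 4, latLen u i j = latLen u j i := by
    intro i j
    unfold latLen
    exact Finset.gcd_congr rfl (fun x _ => by rw [← Int.natAbs_neg, neg_sub])
  have hRsymm : ∀ i j : Fin 4, rmod u i j 2 = rmod u j i 2 := fun i j => by
    unfold rmod; rw [hLsymm]
  have hL2 : ∀ i j : Fin 4, i ≠ j → (2 : ℝ) ≤ (latLen u i j : ℝ) := fun i j hij => by
    exact_mod_cast hlen i j hij
  have hR1 : ∀ i j : Fin 4, (rmod u i j 2 : ℝ) ≤ 1 := fun i j => by
    have : rmod u i j 2 ≤ 1 := Nat.lt_succ_iff.mp (Nat.mod_lt _ (by norm_num))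
    exact_mod_cast this
  have hR0 : ∀ i j : Fin 4, (0 : ℝ) ≤ (rmod u i j 2 : ℝ) := fun i j => Nat.cast_nonneg _
  have hLR : ∀ i j : Fin 4, i ≠ j → (0 : ℝ) < (latLen u i j : ℝ) - (rmod u i j 2 : ℝ) := by
    intro i j h
    have := hL2 i j h
    have := hR1 i j
    linarith
  have hLpos : ∀ i j : Fin 4, i ≠ j → (0 : ℝ) < (latLen u i j : ℝ) := by
    intro i j h; have := hL2 i j h; linarith
  set D : Fin 4 → Fin 4 → ℝ := fun i j =>
    if i = j then 0 else (rmod u i j 2 : ℝ) / ((latLen u i j : ℝ) - (rmod u i j 2 : ℝ)) with hD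
  have hDsym : ∀ i j, D i j = D j i := by
    intro i j
    by_cases h : i = j
    · subst h; rfl
    · simp only [hD, if_neg h, if_neg (Ne.symm h), hLsymm i j, hRsymm i j]
  have hD0 : ∀ i j, 0 ≤ D i j := by
    intro i j
    by_cases h : i = j
    · simp [hD, h]
    · simp only [hD, if_neg h]
      exact div_nonneg (hR0 i j) (hLR i j h).le
  have hDrow : ∀ i, ∑ j, D i j ≤ 1 := by
    intro i
    have h1 : ∑ j ∈ Finset.univ.erase i, D i j = ∑ j, D i j :=
      Finset.sum_erase _ (by simp [hD])
    have h2 : ∑ j ∈ Finset.univ.erase i, D i j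
        = ∑ j ∈ Finset.univ.erase i,
            (rmod u i j 2 : ℝ) / ((latLen u i j : ℝ) - (rmod u i j 2 : ℝ)) := by
      refine Finset.sum_congr rfl (fun j hj => ?_)
      have : i ≠ j := (Finset.ne_of_mem_erase hj).symm
      simp [hD, this]
    have := hAnn i
    rw [hA i] at this
    rw [← h1, h2]
    linarith
  apply Set.Subset.antisymm
  · -- forward inclusion
    intro x hx
    rw [lsimplex, mem_hull_iff] at hx
    obtain ⟨lam, hl0, hl1, hxx⟩ := hx
    obtain ⟨i, hkey⟩ := pigeon D hDsym hD0 hDrow lam hl0 hl1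
    set c : Fin 4 → ℝ := fun j =>
      ((latLen u i j : ℝ) - (rmod u i j 2 : ℝ)) / (latLen u i j : ℝ) with hc
    have hcpos : ∀ j, j ≠ i → 0 < c j := by
      intro j hj
      exact div_pos (hLR i j (Ne.symm hj)) (hLpos i j (Ne.symm hj))
    have hid : ∀ j ∈ Finset.univ.erase i, lam j / c j = lam j + D i j * lam j := by
      intro j hj
      have hji : j ≠ i := Finset.ne_of_mem_erase hj
      have h1 := hLR i j (Ne.symm hji)
      have h2 := hLpos i j (Ne.symm hji)
      simp only [hc, hD, if_neg (Ne.symm hji)]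
      rw [div_div_eq_mul_div]
      field_simp
      ring
    set w : Fin 4 → ℝ := fun j =>
      if j = i then 1 - ∑ j' ∈ Finset.univ.erase i, lam j' / c j' else lam j / c j with hw
    have hlam_erase : ∑ j ∈ Finset.univ.erase i, lam j = 1 - lam i := by
      have := Finset.sum_erase_add Finset.univ lam (Finset.mem_univ i)
      rw [hl1] at this
      linarith
    have hsum_lc : ∑ j' ∈ Finset.univ.erase i, lam j' / c j' ≤ 1 := by
      rw [Finset.sum_congr rfl hid, Finset.sum_add_distrib, hlam_erase]
      have e2 : ∑ j ∈ Finset.univ.erase i, D i j * lam j = ∑ j, D i j * lam j :=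
        Finset.sum_erase _ (by simp [hD])
      rw [e2]
      linarith
    have hw0 : ∀ j, 0 ≤ w j := by
      intro j
      by_cases hj : j = i
      · simp only [hw, if_pos hj]
        linarith
      · simp only [hw, if_neg hj]
        exact div_nonneg (hl0 j) (hcpos j hj).le
    have hwe : ∑ j ∈ Finset.univ.erase i, w j = ∑ j ∈ Finset.univ.erase i, lam j / c j :=
      Finset.sum_congr rfl (fun j hj => by
        simp only [hw, if_neg (Finset.ne_of_mem_erase hj)])
    have hw1 : ∑ j, w j = 1 := by
      rw [← Finset.sum_erase_add _ _ (Finset.mem_univ i), hwe]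
      simp only [hw, if_pos rfl]
      ring
    have hv : ∀ j ∈ Finset.univ.erase i,
        w j • dilVert u i 2 j = lam j • toR (u j) + (w j - lam j) • toR (u i) := by
      intro j hj
      have hji : j ≠ i := Finset.ne_of_mem_erase hj
      have h1 := hLR i j (Ne.symm hji)
      have h2 := hLpos i j (Ne.symm hji)
      rw [dilVert, if_neg hji, smul_add, smul_smul, smul_smul]
      have e1 : w j * (((latLen u i j : ℝ) - (rmod u i j 2 : ℝ)) / (latLen u i j : ℝ)) = lam j := by
        simp only [hw, if_neg hji, hc]
        rw [div_mul_cancel₀]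
        exact (div_pos h1 h2).ne'
      have e2 : w j * ((rmod u i j 2 : ℝ) / (latLen u i j : ℝ)) = w j - lam j := by
        simp only [hw, if_neg hji, hc]
        rw [div_div_eq_mul_div]
        field_simp
        ring
      rw [e1, e2]
    have hsum : ∑ j, w j • dilVert u i 2 j = x := by
      rw [← hxx]
      calc ∑ j, w j • dilVert u i 2 j
          = ∑ j ∈ Finset.univ.erase i, w j • dilVert u i 2 j + w i • dilVert u i 2 i :=
            (Finset.sum_erase_add _ _ (Finset.mem_univ i)).symm
        _ = (∑ j ∈ Finset.univ.erase i,
              (lam j • toR (u j) + (w j - lam j) • toR (u i))) + w i • toR (u i) := by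
            rw [Finset.sum_congr rfl hv, dilVert, if_pos rfl]
        _ = ∑ j ∈ Finset.univ.erase i, lam j • toR (u j)
              + ((∑ j ∈ Finset.univ.erase i, (w j - lam j)) + w i) • toR (u i) := by
            rw [Finset.sum_add_distrib, add_assoc, ← Finset.sum_smul, ← add_smul]
        _ = ∑ j ∈ Finset.univ.erase i, lam j • toR (u j) + lam i • toR (u i) := by
            congr 2
            rw [Finset.sum_sub_distrib, hwe, hlam_erase]
            have hwie : ∑ j ∈ Finset.univ.erase i, lam j / c j = 1 - w i := by
              simp only [hw, if_pos rfl]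
              ring
            rw [hwie]
            ring
        _ = ∑ j, lam j • toR (u j) := Finset.sum_erase_add _ _ (Finset.mem_univ i)
    have hmem : x ∈ dil u i 2 := by
      rw [dil, mem_hull_iff]
      exact ⟨w, hw0, hw1, hsum⟩
    fin_cases i <;> simp only [Set.mem_union] <;> tauto
  · -- reverse inclusion
    have hsub : ∀ i, dil u i 2 ⊆ lsimplex u := by
      intro i
      rw [dil, lsimplex]
      apply convexHull_min _ (convex_convexHull ℝ _)
      rintro _ ⟨j, rfl⟩
      by_cases hj : j = i
      · rw [dilVert, if_pos hj]
        exact subset_convexHull ℝ _ ⟨i, rfl⟩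
      · rw [dilVert, if_neg hj]
        have h1 := hLR i j (Ne.symm hj)
        have h2 := hLpos i j (Ne.symm hj)
        refine (convex_convexHull ℝ (Set.range fun i => toR (u i)))
          (subset_convexHull ℝ _ ⟨j, rfl⟩) (subset_convexHull ℝ _ ⟨i, rfl⟩)
          (div_nonneg h1.le h2.le) (div_nonneg (hR0 i j) h2.le) ?_
        rw [← add_div, sub_add_cancel, div_self h2.ne']
    exact Set.union_subset (Set.union_subset (Set.union_subset (hsub 0) (hsub 1)) (hsub 2)) (hsub 3)
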